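/- arXiv:1908.09628 — 2 statements merged into one kernel-verified Lean document; each statement's English description precedes it below -/
import Mathlib

section
/- For every integer m ≥ k ≥ 1, the sequence (1, C(m,1), C(m,2), ..., C(m,k)) is an M-sequence; moreover, for any integer a with 0 ≤ a ≤ C(m,k), the sequence (1, C(m,1), ..., C(m,k-1), a) is also an M-sequence. -/
/-- The largest `a` such that `C(a,i) ≤ n` (for `n ≥ 1`, `i ≥ 1`):
the top term of the `i`-th Macaulay representation of `n`. -/
def macaulayTop (n i : ℕ) : ℕ :=
  Nat.findGreatest (fun a => Nat.choose a i ≤ n) (n + i)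

/-- The Macaulay pseudo-power `n^{<i>}`: write the `i`-th Macaulay representation
`n = C(a_i,i) + C(a_{i-1},i-1) + ⋯ + C(a_j,j)` (computed greedily) and
return `C(a_i+1,i+1) + C(a_{i-1}+1,i) + ⋯ + C(a_j+1,j+1)`; also `0^{<i>} = 0`. -/
def pseudoPow : ℕ → ℕ → ℕ
  | _, 0 => 0
  | n, (i+1) =>
    if n = 0 then 0
    else Nat.choose (macaulayTop n (i+1) + 1) (i+2) +
      pseudoPow (n - Nat.choose (macaulayTop n (i+1)) (i+1)) i

/-- `(g 0, g 1, …, g k)` is an M-sequence: `g 0 = 1` and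
`g (i+1) ≤ (g i)^{<i>}` for all `1 ≤ i < k`. -/
def IsMSequence (g : ℕ → ℕ) (k : ℕ) : Prop :=
  g 0 = 1 ∧ ∀ i, 1 ≤ i → i < k → g (i + 1) ≤ pseudoPow (g i) i

lemma aux_strict (i : ℕ) (hi : 1 ≤ i) : ∀ m a, i ≤ m → m < a → Nat.choose m i < Nat.choose a i := by
  intro m a him hma
  induction a with
  | zero => omega
  | succ n ih =>
    rcases Nat.lt_or_ge m n with h | h
    · calc Nat.choose m i < Nat.choose n i := ih h
        _ ≤ Nat.choose (n+1) i := by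
          obtain ⟨j, rfl⟩ : ∃ j, i = j + 1 := ⟨i - 1, by omega⟩
          rw [Nat.choose_succ_succ']
          omega
    · have : m = n := by omega
      subst this
      obtain ⟨j, rfl⟩ : ∃ j, i = j + 1 := ⟨i - 1, by omega⟩
      rw [Nat.choose_succ_succ']
      have : 0 < Nat.choose m j := Nat.choose_pos (by omega)
      omega

lemma aux_lb : ∀ m i, 1 ≤ i → i ≤ m → m - i + 1 ≤ Nat.choose m i := by
  intro m
  induction m with
  | zero => intro i h1 h2; omega
  | succ n ih =>
    intro i h1 h2
    rcases Nat.lt_or_ge n i with h | h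
    · have : i = n + 1 := by omega
      subst this; simp
    · obtain ⟨j, rfl⟩ : ∃ j, i = j + 1 := ⟨i - 1, by omega⟩
      rw [Nat.choose_succ_succ']
      have h3 := ih (j+1) h1 h
      have : 0 < Nat.choose n j := Nat.choose_pos (by omega)
      omega

lemma top_eq (m i : ℕ) (hi : 1 ≤ i) (him : i ≤ m) : macaulayTop (Nat.choose m i) i = m := by
  unfold macaulayTop
  rw [Nat.findGreatest_eq_iff]
  refine ⟨?_, fun _ => le_refl _, fun a ha hb => ?_⟩
  · have := aux_lb m i hi him; omega
  · simp only [not_le]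
    exact aux_strict i hi m a him ha

lemma pseudoPow_zero : ∀ i, pseudoPow 0 i = 0 := by
  intro i; cases i <;> simp [pseudoPow]

lemma pseudoPow_choose (m i : ℕ) (hi : 1 ≤ i) (him : i ≤ m) :
    pseudoPow (Nat.choose m i) i = Nat.choose (m + 1) (i + 1) := by
  obtain ⟨j, rfl⟩ : ∃ j, i = j + 1 := ⟨i - 1, by omega⟩
  rw [pseudoPow]
  have hpos : Nat.choose m (j+1) ≠ 0 := (Nat.choose_pos him).ne'
  rw [if_neg hpos, top_eq m (j+1) hi him, Nat.sub_self, pseudoPow_zero]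
  show _ + 0 = Nat.choose (m+1) (j+2)
  omega

/-- for integers `m ≥ k ≥ 1`, the sequence `(1, C(m,1), …, C(m,k))`
is an M-sequence; moreover, for any `0 ≤ a ≤ C(m,k)`, the sequence
`(1, C(m,1), …, C(m,k-1), a)` is also an M-sequence. -/
theorem choose_is_msequence (m k : ℕ) (hk : 1 ≤ k) (hkm : k ≤ m) :
    IsMSequence (fun i => Nat.choose m i) k ∧
    ∀ a, a ≤ Nat.choose m k →
      IsMSequence (fun i => if i = k then a else Nat.choose m i) k := by
  have key : ∀ i, 1 ≤ i → i < k → Nat.choose m (i+1) ≤ pseudoPow (Nat.choose m i) i := by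
    intro i h1 h2
    rw [pseudoPow_choose m i h1 (by omega)]
    exact Nat.choose_le_choose (i+1) (by omega)
  constructor
  · exact ⟨Nat.choose_zero_right m, key⟩
  · intro a ha
    refine ⟨by simp [Nat.choose_zero_right]; omega, fun i h1 h2 => ?_⟩
    simp only
    rw [if_neg (by omega : ¬ i = k)]
    by_cases hik : i + 1 = k
    · rw [if_pos hik]
      calc a ≤ Nat.choose m k := ha
        _ = Nat.choose m (i+1) := by rw [hik]
        _ ≤ pseudoPow (Nat.choose m i) i := key i h1 h2
    · rw [if_neg hik]
      exact key i h1 h2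
end

section
/- Fix k ≥ 2. If (1, g_1, ..., g_k) is an M-sequence with g_k = a ≥ 1 and g_{k-1} ≤ C(m, k-1) for some integer m ≥ k, then a ≤ C(m+1, k). Consequently, any M-sequence ending in a must satisfy g_{k-1} = Ω(a^{(k-1)/k}), i.e., there is a constant c_k > 0 depending only on k with g_{k-1} ≥ c_k · a^{(k-1)/k}. -/
lemma pseudoPow_zero_left (i : ℕ) : pseudoPow 0 i = 0 := by
  cases i <;> simp [pseudoPow]

lemma macaulayTop_spec {n i : ℕ} (hn : 1 ≤ n) (hi : 1 ≤ i) :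
    i ≤ macaulayTop n i ∧ Nat.choose (macaulayTop n i) i ≤ n ∧
      n < Nat.choose (macaulayTop n i + 1) i := by
  have hwit : Nat.choose i i ≤ n := by simpa using hn
  have hib : i ≤ n + i := Nat.le_add_left i n
  have hle : i ≤ macaulayTop n i :=
    Nat.le_findGreatest (P := fun a => Nat.choose a i ≤ n) hib hwit
  have hP : Nat.choose (macaulayTop n i) i ≤ n :=
    Nat.findGreatest_spec (P := fun a => Nat.choose a i ≤ n) hib hwit
  have hbig : ¬ (Nat.choose (n + i) i ≤ n) := by
    have h1 : Nat.choose (n + i) i = Nat.choose (n + i) n := by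
      have := Nat.choose_symm (show n ≤ n + i from Nat.le_add_right n i)
      simpa [Nat.add_sub_cancel_left] using this
    have h2 : n + 1 ≤ Nat.choose (n + i) n := by
      calc n + 1 = Nat.choose (n + 1) n := (Nat.choose_succ_self_right n).symm
        _ ≤ Nat.choose (n + i) n := Nat.choose_le_choose n (by omega)
    omega
  have hne : macaulayTop n i ≠ n + i := by
    intro h; rw [h] at hP; exact hbig hP
  have hlt : macaulayTop n i < n + i :=
    lt_of_le_of_ne (Nat.findGreatest_le _) hne
  have := Nat.findGreatest_is_greatest (P := fun a => Nat.choose a i ≤ n)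
    (n := n + i) (k := macaulayTop n i + 1) (Nat.lt_succ_self _) hlt
  exact ⟨hle, hP, by omega⟩

lemma pseudoPow_le (i : ℕ) : ∀ n m : ℕ, i ≤ m → n ≤ Nat.choose m i →
    pseudoPow n i ≤ Nat.choose (m + 1) (i + 1) := by
  induction i with
  | zero => intro n m _ _; simp [pseudoPow]
  | succ i ih =>
    intro n m him hn
    by_cases h0 : n = 0
    · simp [pseudoPow, h0]
    have hn1 : 1 ≤ n := Nat.one_le_iff_ne_zero.2 h0
    obtain ⟨hti, h1, h2⟩ := macaulayTop_spec (n := n) (i := i + 1) hn1 (by omega)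
    rw [pseudoPow, if_neg h0]
    show Nat.choose (macaulayTop n (i + 1) + 1) (i + 2) +
        pseudoPow (n - Nat.choose (macaulayTop n (i + 1)) (i + 1)) i ≤
        Nat.choose (m + 1) (i + 2)
    generalize hgen : macaulayTop n (i + 1) = t at hti h1 h2 ⊢
    have hss : Nat.choose (m + 1) (i + 1) = Nat.choose m i + Nat.choose m (i + 1) :=
      Nat.choose_succ_succ m i
    have hpos : 0 < Nat.choose m i := Nat.choose_pos (show i ≤ m by omega)
    have htm : t ≤ m := by
      by_contra hc
      push_neg at hc
      have hA : Nat.choose (m + 1) (i + 1) ≤ Nat.choose t (i + 1) :=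
        Nat.choose_le_choose _ hc
      omega
    have hss2 : Nat.choose (t + 1) (i + 1) = Nat.choose t i + Nat.choose t (i + 1) :=
      Nat.choose_succ_succ t i
    by_cases hcase : t = m
    · have hr : n - Nat.choose t (i + 1) = 0 := by rw [hcase]; omega
      rw [hr, pseudoPow_zero_left, hcase]
      simp
    · have htm' : t < m := lt_of_le_of_ne htm hcase
      have hrc : n - Nat.choose t (i + 1) ≤ Nat.choose t i := by omega
      have hih : pseudoPow (n - Nat.choose t (i + 1)) i ≤ Nat.choose (t + 1) (i + 1) :=
        ih (n - Nat.choose t (i + 1)) t (by omega) hrc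
      have hps : Nat.choose (t + 2) (i + 2) =
          Nat.choose (t + 1) (i + 1) + Nat.choose (t + 1) (i + 2) :=
        Nat.choose_succ_succ (t + 1) (i + 1)
      have hmono : Nat.choose (t + 2) (i + 2) ≤ Nat.choose (m + 1) (i + 2) :=
        Nat.choose_le_choose _ (by omega)
      omega

/-- fix `k ≥ 2`. If `(1, g 1, …, g k)` is an M-sequence with
`g k = a ≥ 1` and `g (k-1) ≤ C(m, k-1)` for some integer `m ≥ k`, then
`a ≤ C(m+1, k)`. Consequently there is a constant `c > 0`, depending only on `k`,
such that any M-sequence ending in `a` satisfies `g (k-1) ≥ c * a^((k-1)/k)`. -/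
theorem msequence_last_entry_bound (k : ℕ) (hk : 2 ≤ k) :
    (∀ (g : ℕ → ℕ) (m a : ℕ), IsMSequence g k → g k = a → 1 ≤ a → k ≤ m →
        g (k - 1) ≤ Nat.choose m (k - 1) → a ≤ Nat.choose (m + 1) k) ∧
    ∃ c : ℝ, 0 < c ∧ ∀ (g : ℕ → ℕ) (a : ℕ), IsMSequence g k → g k = a → 1 ≤ a →
        c * (a : ℝ) ^ ((k - 1 : ℝ) / k) ≤ (g (k - 1) : ℝ) := by
  have part1 : ∀ (g : ℕ → ℕ) (m a : ℕ), IsMSequence g k → g k = a → 1 ≤ a → k ≤ m →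
      g (k - 1) ≤ Nat.choose m (k - 1) → a ≤ Nat.choose (m + 1) k := by
    intro g m a hg hgk ha hkm hb
    obtain ⟨-, hstep⟩ := hg
    have h1 : g (k - 1 + 1) ≤ pseudoPow (g (k - 1)) (k - 1) :=
      hstep (k - 1) (by omega) (by omega)
    have hk1 : k - 1 + 1 = k := by omega
    rw [hk1] at h1
    have h2 := pseudoPow_le (k - 1) (g (k - 1)) m (by omega) hb
    rw [hk1] at h2
    omega
  refine ⟨part1, ((k + 1 : ℝ) ^ k * (Nat.factorial (k - 1)))⁻¹, ?_, ?_⟩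
  · positivity
  intro g a hg hgk ha
  set b := g (k - 1) with hbdef
  -- b ≥ 1
  have hb1 : 1 ≤ b := by
    by_contra hb0
    have hb0' : b = 0 := by omega
    obtain ⟨-, hstep⟩ := hg
    have h1 : g (k - 1 + 1) ≤ pseudoPow (g (k - 1)) (k - 1) :=
      hstep (k - 1) (by omega) (by omega)
    rw [show k - 1 + 1 = k by omega] at h1
    rw [← hbdef, hb0', pseudoPow_zero_left] at h1
    omega
  -- existence of m with b ≤ C(m, k-1)
  have hex : ∃ m, b ≤ Nat.choose m (k - 1) := by
    refine ⟨b + k, ?_⟩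
    have h1 : Nat.choose (b + k) (k - 1) = Nat.choose (b + k) (b + 1) := by
      have := Nat.choose_symm (show k - 1 ≤ b + k by omega)
      rw [show b + k - (k - 1) = b + 1 by omega] at this
      exact this.symm
    have h2 : b + 2 ≤ Nat.choose (b + k) (b + 1) := by
      calc b + 2 = Nat.choose (b + 2) (b + 1) := (Nat.choose_succ_self_right (b + 1)).symm
        _ ≤ Nat.choose (b + k) (b + 1) := Nat.choose_le_choose _ (by omega)
    omega
  classical
  set m₀ := Nat.find hex with hm0
  set m := max m₀ k with hm
  have hkm : k ≤ m := le_max_right _ _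
  have hbm : b ≤ Nat.choose m (k - 1) :=
    le_trans (Nat.find_spec hex) (Nat.choose_le_choose _ (le_max_left _ _))
  have hak : a ≤ Nat.choose (m + 1) k := part1 g m a hg hgk ha hkm hbm
  have hapow : a ≤ (m + 1) ^ k := le_trans hak (Nat.choose_le_pow _ _)
  -- key ℕ inequality
  have key : (m + 1) ^ (k - 1) ≤ (k + 1) ^ k * (Nat.factorial (k - 1)) * b := by
    by_cases hcase : m = k
    · calc (m + 1) ^ (k - 1) = (k + 1) ^ (k - 1) := by rw [hcase]
        _ ≤ (k + 1) ^ k := Nat.pow_le_pow_right (by omega) (by omega)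
        _ = (k + 1) ^ k * 1 * 1 := by ring
        _ ≤ (k + 1) ^ k * (Nat.factorial (k - 1)) * b :=
            Nat.mul_le_mul (Nat.mul_le_mul_left _ (Nat.one_le_iff_ne_zero.2
              (Nat.factorial_ne_zero _))) hb1
    · have hmk : k < m := lt_of_le_of_ne hkm (Ne.symm hcase)
      have hmm0 : m = m₀ := by omega
      have hmin : ¬ b ≤ Nat.choose (m - 1) (k - 1) := by
        rw [hmm0]
        exact Nat.find_min hex (by omega)
      have hdesc : (m - 1 + 1 - (k - 1)) ^ (k - 1) ≤
          (Nat.factorial (k - 1)) * Nat.choose (m - 1) (k - 1) := by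
        rw [← Nat.descFactorial_eq_factorial_mul_choose]
        exact Nat.pow_sub_le_descFactorial _ _
      set d := m - k with hd
      have hd1 : 1 ≤ d := by omega
      have hsub : m - 1 + 1 - (k - 1) = d + 1 := by omega
      rw [hsub] at hdesc
      have hdb : (d + 1) ^ (k - 1) ≤ (Nat.factorial (k - 1)) * b := by
        calc (d + 1) ^ (k - 1) ≤ (Nat.factorial (k - 1)) * Nat.choose (m - 1) (k - 1) := hdesc
          _ ≤ (Nat.factorial (k - 1)) * b := Nat.mul_le_mul_left _ (by omega)
      have hmle : m + 1 ≤ (k + 1) * (d + 1) := by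
        have : m + 1 = k + d + 1 := by omega
        nlinarith
      calc (m + 1) ^ (k - 1) ≤ ((k + 1) * (d + 1)) ^ (k - 1) :=
            Nat.pow_le_pow_left hmle _
        _ = (k + 1) ^ (k - 1) * (d + 1) ^ (k - 1) := mul_pow _ _ _
        _ ≤ (k + 1) ^ k * ((Nat.factorial (k - 1)) * b) :=
            Nat.mul_le_mul (Nat.pow_le_pow_right (by omega) (by omega)) hdb
        _ = (k + 1) ^ k * (Nat.factorial (k - 1)) * b := by ring
  -- real side
  have hkR : (k : ℝ) ≠ 0 := by positivity
  have haR : (a : ℝ) ≤ ((m + 1 : ℕ) : ℝ) ^ (k : ℕ) := by exact_mod_cast hapow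
  have hexp : (0 : ℝ) ≤ (k - 1 : ℝ) / k := by
    apply div_nonneg _ (by positivity)
    have : (2 : ℝ) ≤ k := by exact_mod_cast hk
    linarith
  have hrpow : (a : ℝ) ^ ((k - 1 : ℝ) / k) ≤ ((m + 1 : ℕ) : ℝ) ^ (k - 1 : ℕ) := by
    have h1 : (a : ℝ) ^ ((k - 1 : ℝ) / k) ≤
        (((m + 1 : ℕ) : ℝ) ^ (k : ℕ)) ^ ((k - 1 : ℝ) / k) :=
      Real.rpow_le_rpow (by positivity) haR hexp
    have hmpos : (0 : ℝ) ≤ ((m + 1 : ℕ) : ℝ) := by positivity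
    have h2 : (((m + 1 : ℕ) : ℝ) ^ (k : ℕ)) ^ ((k - 1 : ℝ) / k) =
        ((m + 1 : ℕ) : ℝ) ^ ((k : ℝ) * ((k - 1 : ℝ) / k)) := by
      rw [← Real.rpow_natCast (((m + 1 : ℕ) : ℝ)) k, ← Real.rpow_mul hmpos]
    have h3 : (k : ℝ) * ((k - 1 : ℝ) / k) = (k - 1 : ℝ) := by
      field_simp
    have h4 : ((m + 1 : ℕ) : ℝ) ^ ((k : ℝ) - 1) = ((m + 1 : ℕ) : ℝ) ^ (k - 1 : ℕ) := by
      rw [← Real.rpow_natCast (((m + 1 : ℕ) : ℝ)) (k - 1)]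
      congr 1
      have : ((k - 1 : ℕ) : ℝ) = (k : ℝ) - 1 := by
        have : 1 ≤ k := by omega
        push_cast [this]
        ring
      rw [this]
    rw [h2, h3, h4] at h1
    exact h1
  have hDpos : (0 : ℝ) < (k + 1 : ℝ) ^ k * (Nat.factorial (k - 1)) := by positivity
  rw [inv_mul_le_iff₀ hDpos] at *
  calc (a : ℝ) ^ ((k - 1 : ℝ) / k) ≤ ((m + 1 : ℕ) : ℝ) ^ (k - 1 : ℕ) := hrpow
    _ ≤ (k + 1 : ℝ) ^ k * (Nat.factorial (k - 1)) * b := by exact_mod_cast key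
    _ = (k + 1 : ℝ) ^ k * (Nat.factorial (k - 1)) * ↑(g (k - 1)) := by rw [hbdef]
end
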